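/- If, in the successive shortest path scheme, flow is always augmented along a minimum-cost residual path from a vertex with positive excess to a vertex with negative excess, and the residual network initially contains no negative-cost cycle, then after each augmentation the residual network still contains no negative-cost cycle. -/

import Mathlib

open Finset

/-- A flow network: directed arcs with costs, capacities (possibly infinite),
lower bounds and vertex balances. -/
structure Network (V E : Type) where
  src : E → V
  dst : E → V
  cost : E → ℝ
  cap : E → WithTop ℝ
  low : E → ℝ
  bal : V → ℝ

variable {V E : Type}

def outflow [Fintype E] [DecidableEq V] (N : Network V E) (f : E → ℝ) (v : V) : ℝ :=
  ∑ e, if N.src e = v then f e else 0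

def inflow [Fintype E] [DecidableEq V] (N : Network V E) (f : E → ℝ) (v : V) : ℝ :=
  ∑ e, if N.dst e = v then f e else 0

/-- `f` obeys lower bounds and capacities. -/
def RespectsCap (N : Network V E) (f : E → ℝ) : Prop :=
  ∀ e, N.low e ≤ f e ∧ (f e : WithTop ℝ) ≤ N.cap e

/-- Feasible flow: capacity constraints and balance constraints. -/
def Feasible [Fintype E] [DecidableEq V] (N : Network V E) (f : E → ℝ) : Prop :=
  RespectsCap N f ∧ ∀ v, outflow N f v - inflow N f v = N.bal v

def flowCost [Fintype E] (N : Network V E) (f : E → ℝ) : ℝ := ∑ e, N.cost e * f e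

/-- Excess of a vertex: `b(v) + inflow - outflow`. -/
def excess [Fintype E] [DecidableEq V] (N : Network V E) (f : E → ℝ) (v : V) : ℝ :=
  N.bal v + inflow N f v - outflow N f v

/-- Residual steps: `Sum.inl e` is the forward residual arc of `e`,
`Sum.inr e` the backward (reverse) residual arc. -/
def stepTail (N : Network V E) : E ⊕ E → V := Sum.elim N.src N.dst
def stepHead (N : Network V E) : E ⊕ E → V := Sum.elim N.dst N.src
def stepCost (N : Network V E) : E ⊕ E → ℝ := Sum.elim N.cost (fun e => -N.cost e)

/-- A residual step is present in the residual network `G_f`. -/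
def StepOk (N : Network V E) (f : E → ℝ) : E ⊕ E → Prop :=
  Sum.elim (fun e => (f e : WithTop ℝ) < N.cap e) (fun e => N.low e < f e)

def listCost (N : Network V E) (L : List (E ⊕ E)) : ℝ := (L.map (stepCost N)).sum

/-- A (closed) directed cycle in the residual network `G_f`. -/
def IsResidCycle (N : Network V E) (f : E → ℝ) (L : List (E ⊕ E)) : Prop :=
  L ≠ [] ∧ (∀ d ∈ L, StepOk N f d) ∧
  L.Chain' (fun a b => stepHead N a = stepTail N b) ∧
  L.getLast?.map (stepHead N) = L.head?.map (stepTail N)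

/-- The residual network contains no negative-cost cycle. -/
def NoNegCycle (N : Network V E) (f : E → ℝ) : Prop :=
  ∀ L, IsResidCycle N f L → 0 ≤ listCost N L

/-- A directed path from `s` to `t` in the residual network `G_f`. -/
def IsResidPath (N : Network V E) (f : E → ℝ) (s t : V) (L : List (E ⊕ E)) : Prop :=
  (∀ d ∈ L, StepOk N f d) ∧
  L.Chain' (fun a b => stepHead N a = stepTail N b) ∧
  L.head?.map (stepTail N) = some s ∧ L.getLast?.map (stepHead N) = some t

/-- Augmenting `δ` units of flow along the residual path `P`. -/
def augment [DecidableEq E] (f : E → ℝ) (δ : ℝ) (P : List (E ⊕ E)) : E → ℝ :=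
  fun e => f e + δ * ((P.count (Sum.inl e) : ℝ) - (P.count (Sum.inr e) : ℝ))

namespace SSPaux

variable {V E : Type}

/-- Walks in the residual graph, parameterized by an arc-availability predicate. -/
def IsWalk (N : Network V E) (ok : E ⊕ E → Prop) : V → V → List (E ⊕ E) → Prop
  | s, t, [] => s = t
  | s, t, a :: L => ok a ∧ stepTail N a = s ∧ IsWalk N ok (stepHead N a) t L

lemma isWalk_nil {N : Network V E} {ok} {s t : V} : IsWalk N ok s t [] ↔ s = t := Iff.rfl

lemma isWalk_cons {N : Network V E} {ok} {s t : V} {a : E ⊕ E} {L} :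
    IsWalk N ok s t (a :: L) ↔ ok a ∧ stepTail N a = s ∧ IsWalk N ok (stepHead N a) t L :=
  Iff.rfl

lemma isWalk_append {N : Network V E} {ok} {s t : V} {L₁ L₂ : List (E ⊕ E)} :
    IsWalk N ok s t (L₁ ++ L₂) ↔ ∃ m, IsWalk N ok s m L₁ ∧ IsWalk N ok m t L₂ := by
  induction L₁ generalizing s with
  | nil => simp [isWalk_nil]
  | cons a L ih => simp [isWalk_cons, ih, and_assoc]

lemma listCost_append {N : Network V E} (L₁ L₂ : List (E ⊕ E)) :
    listCost N (L₁ ++ L₂) = listCost N L₁ + listCost N L₂ := by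
  simp [listCost]

lemma listCost_cons {N : Network V E} (a : E ⊕ E) (L : List (E ⊕ E)) :
    listCost N (a :: L) = stepCost N a + listCost N L := by
  simp [listCost]

lemma isWalk_iff {N : Network V E} {ok} :
    ∀ {L : List (E ⊕ E)} {s t : V}, L ≠ [] →
    (IsWalk N ok s t L ↔ ((∀ a ∈ L, ok a) ∧
      L.Chain' (fun a b => stepHead N a = stepTail N b) ∧
      L.head?.map (stepTail N) = some s ∧ L.getLast?.map (stepHead N) = some t)) := by
  intro L
  induction L with
  | nil => intro s t h; exact absurd rfl h
  | cons a L ih =>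
    intro s t _
    cases L with
    | nil =>
      constructor
      · rintro ⟨h1, h2, h3⟩
        exact ⟨by simpa using h1, List.isChain_singleton _, by simp [h2], by simp [isWalk_nil.1 h3]⟩
      · rintro ⟨h1, _, h3, h4⟩
        exact ⟨h1 a (by simp), by simpa using h3, isWalk_nil.2 (by simpa using h4)⟩
    | cons b L' =>
      constructor
      · rintro ⟨hok, hts, hw⟩
        obtain ⟨h1, h2, h3, h4⟩ := (ih (by simp)).1 hw
        have htb : stepTail N b = stepHead N a := by simpa using h3
        refine ⟨?_, List.isChain_cons_cons.2 ⟨htb.symm, h2⟩, by simp [hts], ?_⟩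
        · intro x hx
          rcases List.mem_cons.1 hx with rfl | hx
          · exact hok
          · exact h1 x hx
        · simpa [List.getLast?_cons_cons] using h4
      · rintro ⟨h1, h2, h3, h4⟩
        have hhb : stepHead N a = stepTail N b := (List.isChain_cons_cons.1 h2).1
        refine ⟨h1 a (by simp), by simpa using h3,
          (ih (by simp)).2 ⟨fun x hx => h1 x (List.mem_cons_of_mem _ hx),
            (List.isChain_cons_cons.1 h2).2, by simp [hhb], ?_⟩⟩
        simpa [List.getLast?_cons_cons] using h4

lemma ofPath {N : Network V E} {f : E → ℝ} {s t : V} {L : List (E ⊕ E)}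
    (h : IsResidPath N f s t L) : IsWalk N (StepOk N f) s t L ∧ L ≠ [] := by
  have hne : L ≠ [] := by
    rintro rfl
    simpa [IsResidPath] using h.2.2.1
  exact ⟨(isWalk_iff hne).2 ⟨h.1, h.2.1, h.2.2.1, h.2.2.2⟩, hne⟩

lemma toPath {N : Network V E} {f : E → ℝ} {s t : V} {L : List (E ⊕ E)}
    (h : IsWalk N (StepOk N f) s t L) (hne : L ≠ []) : IsResidPath N f s t L := by
  obtain ⟨h1, h2, h3, h4⟩ := (isWalk_iff hne).1 h
  exact ⟨h1, h2, h3, h4⟩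

lemma toCycle {N : Network V E} {f : E → ℝ} {v : V} {L : List (E ⊕ E)}
    (h : IsWalk N (StepOk N f) v v L) (hne : L ≠ []) : IsResidCycle N f L := by
  obtain ⟨h1, h2, h3, h4⟩ := (isWalk_iff hne).1 h
  exact ⟨hne, h1, h2, by rw [h4, h3]⟩

lemma ofCycle {N : Network V E} {f : E → ℝ} {L : List (E ⊕ E)}
    (h : IsResidCycle N f L) : ∃ v, IsWalk N (StepOk N f) v v L ∧ L ≠ [] := by
  obtain ⟨hne, h1, h2, h3⟩ := h
  cases L with
  | nil => exact absurd rfl hne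
  | cons a L =>
    refine ⟨stepTail N a, (isWalk_iff (by simp)).2 ⟨h1, h2, by simp, ?_⟩, by simp⟩
    simpa using h3

lemma sumLawfulBEq {E : Type*} [DecidableEq E] : LawfulBEq (E ⊕ E) := by
  have h1 : ∀ a b : E, ((Sum.inl a : E ⊕ E) == Sum.inl b) = (a == b) := fun _ _ => rfl
  have h2 : ∀ a b : E, ((Sum.inl a : E ⊕ E) == Sum.inr b) = false := fun _ _ => rfl
  have h3 : ∀ a b : E, ((Sum.inr a : E ⊕ E) == Sum.inl b) = false := fun _ _ => rfl
  have h4 : ∀ a b : E, ((Sum.inr a : E ⊕ E) == Sum.inr b) = (a == b) := fun _ _ => rfl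
  refine (fun (h₁ : ∀ {a b : E ⊕ E}, (a == b) = true → a = b) (h₂ : ∀ {a : E ⊕ E}, (a == a) = true) => @LawfulBEq.mk _ _ ⟨h₂⟩ h₁) ?_ ?_
  · intro a b h
    cases a <;> cases b <;> simp_all [h1, h2, h3, h4]
  · intro a
    cases a <;> simp [h1, h4]

lemma mem_of_count_ne_zero {E : Type*} [DecidableEq E] {a : E ⊕ E} {l : List (E ⊕ E)}
    (h : l.count a ≠ 0) : a ∈ l := by
  haveI : LawfulBEq (E ⊕ E) := sumLawfulBEq
  by_contra hm
  have h0 : l.count a = 0 := List.count_eq_zero_of_not_mem hm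
  exact h h0

end SSPaux
namespace SSPaux

variable {V E : Type}

lemma map_not_nodup {α β : Type*} (g : α → β) :
    ∀ (l : List α), ¬ (l.map g).Nodup →
      ∃ a b l₁ l₂ l₃, l = l₁ ++ a :: (l₂ ++ b :: l₃) ∧ g a = g b := by
  intro l
  induction l with
  | nil => simp
  | cons c l ih =>
    intro h
    by_cases hc : g c ∈ l.map g
    · obtain ⟨b, hb, hgb⟩ := List.mem_map.1 hc
      obtain ⟨l₂, l₃, rfl⟩ := List.append_of_mem hb
      exact ⟨c, b, [], l₂, l₃, rfl, hgb.symm⟩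
    · have h' : ¬ (l.map g).Nodup := by
        intro hn
        exact h (by simpa [List.nodup_cons, hc] using hn)
      obtain ⟨a, b, l₁, l₂, l₃, rfl, hab⟩ := ih h'
      exact ⟨a, b, c :: l₁, l₂, l₃, rfl, hab⟩

lemma cost_lb_of_nodup [Fintype E] [DecidableEq E] (N : Network V E) {L : List (E ⊕ E)} (h : L.Nodup) :
    -(∑ a : E ⊕ E, |stepCost N a|) ≤ listCost N L := by
  have h1 : listCost N L = ∑ a ∈ L.toFinset, stepCost N a := (List.sum_toFinset _ h).symm
  have h2 : ∑ a ∈ L.toFinset, |stepCost N a| ≤ ∑ a : E ⊕ E, |stepCost N a| :=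
    Finset.sum_le_sum_of_subset_of_nonneg (Finset.subset_univ _)
      (fun a _ _ => abs_nonneg _)
  have h3 : -(∑ a ∈ L.toFinset, |stepCost N a|) ≤ ∑ a ∈ L.toFinset, stepCost N a := by
    rw [← Finset.sum_neg_distrib]
    exact Finset.sum_le_sum (fun a _ => neg_abs_le _)
  rw [h1]; linarith

/-- Every walk in a residual network without negative cycles has cost at least
`-(sum of |costs|)` (remove cycles, then bound the simple remainder). -/
lemma walk_cost_lb [Fintype E] [DecidableEq E] (N : Network V E) (f : E → ℝ) (hnn : NoNegCycle N f) :
    ∀ (n : ℕ) (L : List (E ⊕ E)) (s v : V), L.length ≤ n →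
      IsWalk N (StepOk N f) s v L →
      -(∑ a : E ⊕ E, |stepCost N a|) ≤ listCost N L := by
  intro n
  induction n with
  | zero =>
    intro L s v hlen _
    have : L = [] := List.length_eq_zero_iff.1 (Nat.le_zero.1 hlen)
    subst this
    simp only [listCost, List.map_nil, List.sum_nil]
    have : (0:ℝ) ≤ ∑ a : E ⊕ E, |stepCost N a| :=
      Finset.sum_nonneg (fun a _ => abs_nonneg _)
    linarith
  | succ n ih =>
    intro L s v hlen hw
    by_cases hnd : (L.map (stepHead N)).Nodup
    · exact cost_lb_of_nodup N (hnd.of_map _)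
    · obtain ⟨a, b, l₁, l₂, l₃, rfl, hab⟩ := map_not_nodup (stepHead N) L hnd
      -- dissect the walk
      obtain ⟨m₁, w₁, w₂⟩ := (isWalk_append (L₁ := l₁) (L₂ := a :: (l₂ ++ b :: l₃))).1 hw
      obtain ⟨oka, hta, w₃⟩ := isWalk_cons.1 w₂
      obtain ⟨m₂, w₄, w₅⟩ := (isWalk_append (L₁ := l₂) (L₂ := b :: l₃)).1 w₃
      obtain ⟨okb, htb, w₆⟩ := isWalk_cons.1 w₅
      -- the cycle l₂ ++ [b] from (stepHead N a) to itself
      have hcyc : IsWalk N (StepOk N f) (stepHead N a) (stepHead N a) (l₂ ++ [b]) := by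
        refine (isWalk_append (L₁ := l₂) (L₂ := [b])).2 ⟨m₂, w₄, ?_⟩
        exact isWalk_cons.2 ⟨okb, htb, hab.symm⟩
      have hcyc0 : 0 ≤ listCost N (l₂ ++ [b]) :=
        hnn _ (toCycle hcyc (by simp))
      -- the shorter walk l₁ ++ a :: l₃
      have hw' : IsWalk N (StepOk N f) s v (l₁ ++ a :: l₃) := by
        refine (isWalk_append (L₁ := l₁) (L₂ := a :: l₃)).2 ⟨m₁, w₁, isWalk_cons.2 ⟨oka, hta, ?_⟩⟩
        rw [hab]; exact w₆
      have hlen' : (l₁ ++ a :: l₃).length ≤ n := by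
        simp only [List.length_append, List.length_cons] at hlen ⊢
        omega
      have hih := ih _ s v hlen' hw'
      have hsplit : listCost N (l₁ ++ a :: (l₂ ++ b :: l₃))
          = listCost N (l₁ ++ a :: l₃) + listCost N (l₂ ++ [b]) := by
        simp only [listCost_append, listCost_cons, listCost]
        simp
        ring
      linarith [hsplit ▸ (by linarith : -(∑ a : E ⊕ E, |stepCost N a|) ≤ listCost N (l₁ ++ a :: l₃) + listCost N (l₂ ++ [b]))]

end SSPaux
open SSPaux in
/-- Augmenting along a minimum-cost residual path from a vertex with positive
excess to a vertex with negative excess preserves the absence of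
negative-cost residual cycles. -/
theorem stmt11 {V E : Type} [Fintype V] [Fintype E] [DecidableEq V] [DecidableEq E]
    (N : Network V E) (f : E → ℝ) (s t : V) (P : List (E ⊕ E)) (δ : ℝ)
    (hcap : RespectsCap N f)
    (hnn : NoNegCycle N f)
    (hs : 0 < excess N f s) (ht : excess N f t < 0)
    (hP : IsResidPath N f s t P)
    (hsimple : (P.map (stepTail N)).Nodup)
    (hmin : ∀ Q, IsResidPath N f s t Q → listCost N P ≤ listCost N Q)
    (hδpos : 0 < δ)
    (hδfwd : ∀ e, Sum.inl e ∈ P → ((f e + δ : ℝ) : WithTop ℝ) ≤ N.cap e)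
    (hδbwd : ∀ e, Sum.inr e ∈ P → N.low e ≤ f e - δ) :
    NoNegCycle N (augment f δ P) := by
  classical
  have hst : s ≠ t := by
    intro h; rw [h] at hs; linarith
  obtain ⟨hPw, hPne⟩ := ofPath hP
  set S : ℝ := ∑ a : E ⊕ E, |stepCost N a| with hS
  set D : V → ℝ := fun v =>
    sInf {x | ∃ L, IsWalk N (StepOk N f) s v L ∧ x = listCost N L} with hDdef
  have hbdd : ∀ v, BddBelow {x | ∃ L, IsWalk N (StepOk N f) s v L ∧ x = listCost N L} := by
    intro v
    refine ⟨-S, ?_⟩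
    rintro x ⟨L, hL, rfl⟩
    exact walk_cost_lb N f hnn L.length L s v le_rfl hL
  have hDle : ∀ v L, IsWalk N (StepOk N f) s v L → D v ≤ listCost N L := by
    intro v L hL
    exact csInf_le (hbdd v) ⟨L, hL, rfl⟩
  have hDge : ∀ (v : V) (B : ℝ), (∃ L, IsWalk N (StepOk N f) s v L) →
      (∀ L, IsWalk N (StepOk N f) s v L → B ≤ listCost N L) → B ≤ D v := by
    rintro v B ⟨L0, hL0⟩ hB
    refine le_csInf ⟨_, L0, hL0, rfl⟩ ?_
    rintro x ⟨L, hL, rfl⟩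
    exact hB L hL
  -- feasibility of D on old residual arcs
  have hfeas : ∀ a, StepOk N f a → (∃ L, IsWalk N (StepOk N f) s (stepTail N a) L) →
      (D (stepHead N a) ≤ D (stepTail N a) + stepCost N a ∧
        ∃ L, IsWalk N (StepOk N f) s (stepHead N a) L) := by
    rintro a hok ⟨L0, hL0⟩
    have hext : ∀ L, IsWalk N (StepOk N f) s (stepTail N a) L →
        IsWalk N (StepOk N f) s (stepHead N a) (L ++ [a]) := by
      intro L hL
      exact isWalk_append.2 ⟨_, hL, isWalk_cons.2 ⟨hok, rfl, isWalk_nil.2 rfl⟩⟩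
    constructor
    · have hkey : ∀ L, IsWalk N (StepOk N f) s (stepTail N a) L →
          D (stepHead N a) - stepCost N a ≤ listCost N L := by
        intro L hL
        have h1 := hDle _ _ (hext L hL)
        rw [listCost_append, listCost_cons,
          show listCost N ([] : List (E ⊕ E)) = 0 from by simp [listCost]] at h1
        linarith
      have := hDge _ _ ⟨L0, hL0⟩ hkey
      linarith
    · exact ⟨_, hext L0 hL0⟩
  -- exact distances along the augmenting path P
  have hPdecomp : ∀ Pre b Suf, P = Pre ++ b :: Suf →
      D (stepTail N b) = listCost N Pre ∧
      D (stepHead N b) = listCost N Pre + stepCost N b ∧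
      (∃ L, IsWalk N (StepOk N f) s (stepTail N b) L) ∧
      (∃ L, IsWalk N (StepOk N f) s (stepHead N b) L) := by
    intro Pre b Suf hPd
    have hPw' := hPw
    rw [hPd] at hPw'
    obtain ⟨m, wPre, wRest⟩ := isWalk_append.1 hPw'
    obtain ⟨okb, htb, wSuf⟩ := isWalk_cons.1 wRest
    subst htb
    have hcostP : listCost N P = listCost N Pre + (stepCost N b + listCost N Suf) := by
      rw [hPd, listCost_append, listCost_cons]
    have hr1 : ∃ L, IsWalk N (StepOk N f) s (stepTail N b) L := ⟨Pre, wPre⟩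
    have hr2 : ∃ L, IsWalk N (StepOk N f) s (stepHead N b) L :=
      ⟨Pre ++ [b], isWalk_append.2 ⟨_, wPre, isWalk_cons.2 ⟨okb, rfl, isWalk_nil.2 rfl⟩⟩⟩
    refine ⟨?_, ?_, hr1, hr2⟩
    · have hle := hDle _ _ wPre
      have hge : listCost N Pre ≤ D (stepTail N b) := by
        refine hDge _ _ hr1 ?_
        intro L hL
        have hQ : IsWalk N (StepOk N f) s t (L ++ b :: Suf) :=
          isWalk_append.2 ⟨_, hL, isWalk_cons.2 ⟨okb, rfl, wSuf⟩⟩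
        have hm := hmin _ (toPath hQ (by simp))
        rw [hcostP, listCost_append, listCost_cons] at hm
        linarith
      linarith
    · have hle : D (stepHead N b) ≤ listCost N Pre + stepCost N b := by
        have h1 := hDle _ _
          (isWalk_append.2 ⟨_, wPre, isWalk_cons.2 ⟨okb, rfl, isWalk_nil.2 rfl⟩⟩ :
            IsWalk N (StepOk N f) s (stepHead N b) (Pre ++ [b]))
        rw [listCost_append, listCost_cons,
          show listCost N ([] : List (E ⊕ E)) = 0 from by simp [listCost]] at h1
        linarith
      have hge : listCost N Pre + stepCost N b ≤ D (stepHead N b) := by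
        refine hDge _ _ hr2 ?_
        intro L hL
        have hQ : IsWalk N (StepOk N f) s t (L ++ Suf) := isWalk_append.2 ⟨_, hL, wSuf⟩
        have hQne : (L ++ Suf) ≠ [] := by
          intro h
          obtain ⟨hL0, hS0⟩ := List.append_eq_nil_iff.mp h
          subst hL0; subst hS0
          exact hst ((isWalk_nil.1 hL).trans (isWalk_nil.1 wSuf))
        have hm := hmin _ (toPath hQ hQne)
        rw [hcostP, listCost_append] at hm
        linarith
      linarith
  -- new residual arcs are reversals of arcs on P
  have hnew : ∀ a, StepOk N (augment f δ P) a → ¬ StepOk N f a →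
      ∃ b, b ∈ P ∧ stepTail N b = stepHead N a ∧ stepHead N b = stepTail N a ∧
        stepCost N b = - stepCost N a := by
    intro a hok' hnok
    cases a with
    | inl e =>
      simp only [StepOk, Sum.elim_inl] at hok' hnok
      have hge : N.cap e ≤ (f e : WithTop ℝ) := le_of_not_gt hnok
      have hlt : augment f δ P e < f e := by
        have h1 := lt_of_lt_of_le hok' hge
        exact_mod_cast h1
      have hcnt : (P.count (Sum.inr e)) ≠ 0 := by
        intro h0
        simp only [augment, h0, Nat.cast_zero, sub_zero] at hlt
        have h2 : (0:ℝ) ≤ (P.count (Sum.inl e) : ℝ) := Nat.cast_nonneg _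
        nlinarith
      have hmem : Sum.inr e ∈ P := mem_of_count_ne_zero hcnt
      exact ⟨Sum.inr e, hmem, rfl, rfl, by simp [stepCost]⟩
    | inr e =>
      simp only [StepOk, Sum.elim_inr] at hok' hnok
      have hle : f e ≤ N.low e := le_of_not_gt hnok
      have hlt : f e < augment f δ P e := lt_of_le_of_lt hle hok'
      have hcnt : (P.count (Sum.inl e)) ≠ 0 := by
        intro h0
        simp only [augment, h0, Nat.cast_zero, zero_sub] at hlt
        have h2 : (0:ℝ) ≤ (P.count (Sum.inr e) : ℝ) := Nat.cast_nonneg _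
        nlinarith
      have hmem : Sum.inl e ∈ P := mem_of_count_ne_zero hcnt
      exact ⟨Sum.inl e, hmem, rfl, rfl, by simp [stepCost]⟩
  -- feasibility of D on all arcs of the new residual network
  have hstep : ∀ a, StepOk N (augment f δ P) a →
      (∃ L, IsWalk N (StepOk N f) s (stepTail N a) L) →
      (D (stepHead N a) ≤ D (stepTail N a) + stepCost N a ∧
        ∃ L, IsWalk N (StepOk N f) s (stepHead N a) L) := by
    intro a hok' hr
    by_cases hok : StepOk N f a
    · exact hfeas a hok hr
    · obtain ⟨b, hbP, h1, h2, h3⟩ := hnew a hok' hok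
      obtain ⟨Pre, Suf, hPd⟩ := List.append_of_mem hbP
      obtain ⟨e1, e2, r1, _⟩ := hPdecomp Pre b Suf hPd
      constructor
      · rw [← h1, ← h2]
        linarith
      · rw [← h1]
        exact r1
  -- telescoping along any walk in the new residual network
  have hprop : ∀ (L : List (E ⊕ E)) (u w : V),
      IsWalk N (StepOk N (augment f δ P)) u w L →
      (∃ L0, IsWalk N (StepOk N f) s u L0) → D w - D u ≤ listCost N L := by
    intro L
    induction L with
    | nil =>
      intro u w hw _
      rw [isWalk_nil.1 hw]
      simp [listCost]
    | cons a L ih =>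
      intro u w hw hr
      obtain ⟨hok', hta, hw'⟩ := isWalk_cons.1 hw
      obtain ⟨hineq, hr'⟩ := hstep a hok' (by rw [hta]; exact hr)
      have hih := ih (stepHead N a) w hw' hr'
      rw [listCost_cons]
      have hDu : D u = D (stepTail N a) := by rw [hta]
      linarith
  -- main argument
  intro L hLcyc
  rcases Classical.em (∀ a ∈ L, StepOk N f a) with hall | hall
  · refine hnn L ⟨hLcyc.1, ?_, hLcyc.2.2.1, hLcyc.2.2.2⟩
    exact hall
  · push_neg at hall
    obtain ⟨a₀, ha₀L, ha₀⟩ := hall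
    obtain ⟨v, hLw, hLne⟩ := ofCycle hLcyc
    obtain ⟨X, Y, hXY⟩ := List.append_of_mem ha₀L
    rw [hXY] at hLw
    obtain ⟨m, wX, wAY⟩ := isWalk_append.1 hLw
    have hwC : IsWalk N (StepOk N (augment f δ P)) m m ((a₀ :: Y) ++ X) :=
      isWalk_append.2 ⟨v, wAY, wX⟩
    have hm : stepTail N a₀ = m := (isWalk_cons.1 wAY).2.1
    have hok'a₀ : StepOk N (augment f δ P) a₀ := hLcyc.2.1 a₀ ha₀L
    obtain ⟨b₀, hb₀P, h1, h2, h3⟩ := hnew a₀ hok'a₀ ha₀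
    obtain ⟨Pre, Suf, hPd⟩ := List.append_of_mem hb₀P
    obtain ⟨_, _, _, r2⟩ := hPdecomp Pre b₀ Suf hPd
    have hreachm : ∃ L0, IsWalk N (StepOk N f) s m L0 := by
      rw [← hm, ← h2]
      exact r2
    have htel := hprop _ m m hwC hreachm
    have hcosteq : listCost N (X ++ a₀ :: Y) = listCost N ((a₀ :: Y) ++ X) := by
      rw [listCost_append, listCost_append]; ring
    rw [hXY, hcosteq]
    linarith
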